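/- Let Y : [0,T] → [0,∞) be C¹ and satisfy Y'(t) ≤ −δ Y(t)^{p/(p−1)} + A Y(t) + B for constants δ > 0, A, B ≥ 0 and p > 1. Then there exists a constant C = C(T, δ, A, B, p), independent of Y(0), such that Y(t) ≤ C t^{1−p} for all t ∈ (0, T]. -/

import Mathlib

open Real Set Filter Topology

private lemma rpow_superadd {a b q : ℝ} (ha : 0 ≤ a) (hb : 0 ≤ b) (hq : 1 ≤ q) :
    a ^ q + b ^ q ≤ (a + b) ^ q := by
  have hab : 0 ≤ a + b := by linarith
  have hq0 : q - 1 ≥ 0 := by linarith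
  have key : ∀ x : ℝ, 0 ≤ x → x ≤ a + b → x ^ q ≤ x * (a + b) ^ (q - 1) := by
    intro x hx hxab
    have : x ^ q = x ^ (1 + (q - 1)) := by ring_nf
    rw [this, Real.rpow_add' hx (by linarith : (1:ℝ) + (q-1) ≠ 0), Real.rpow_one]
    exact mul_le_mul_of_nonneg_left (Real.rpow_le_rpow hx hxab hq0) hx
  have h1 := key a ha (by linarith)
  have h2 := key b hb (by linarith)
  have h3 : (a + b) ^ q = (a + b) * (a + b) ^ (q - 1) := by
    rw [show q = 1 + (q - 1) by ring, Real.rpow_add' hab (by linarith : (1:ℝ) + (q-1) ≠ 0),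
      Real.rpow_one]
    ring_nf
  nlinarith [Real.rpow_nonneg hab (q - 1)]


set_option maxHeartbeats 1000000 in
/-- ODE lemma for regularizing effects: a nonnegative `C¹` quantity satisfying
`Y' ≤ -δ Y^{p/(p-1)} + A Y + B` obeys `Y(t) ≤ C t^{1-p}` with `C` independent of `Y(0)`. -/
theorem ode_regularizing
    (T δ A B p : ℝ) (hT : 0 < T) (hδ : 0 < δ) (hA : 0 ≤ A) (hB : 0 ≤ B) (hp : 1 < p) :
    ∃ C : ℝ, ∀ (Y Y' : ℝ → ℝ),
      (∀ t ∈ Icc 0 T, 0 ≤ Y t) →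
      (∀ t ∈ Icc 0 T, HasDerivAt Y (Y' t) t) →
      (∀ t ∈ Icc 0 T, Y' t ≤ -δ * Y t ^ (p / (p - 1)) + A * Y t + B) →
      ∀ t ∈ Ioc 0 T, Y t ≤ C * t ^ (1 - p) := by
  have hp1 : (0:ℝ) < p - 1 := by linarith
  set q : ℝ := p / (p - 1) with hqdef
  have hq1 : 1 < q := by rw [hqdef, lt_div_iff₀ hp1]; linarith
  have hpq : (p - 1) * (q - 1) = 1 := by
    rw [hqdef]; field_simp; ring
  have hpq2 : (1 - p) * q = -p := by
    rw [hqdef]; field_simp; ring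
  set M : ℝ := max 1 (((A + B) / δ) ^ (p - 1)) with hMdef
  set K : ℝ := max 1 (((p + A * T) / δ) ^ (p - 1)) with hKdef
  have hM1 : (1:ℝ) ≤ M := le_max_left _ _
  have hK1 : (1:ℝ) ≤ K := le_max_left _ _
  have hM0 : (0:ℝ) < M := lt_of_lt_of_le one_pos hM1
  have hK0 : (0:ℝ) < K := lt_of_lt_of_le one_pos hK1
  -- δ M^q ≥ A M + B
  have hABδ : 0 ≤ (A + B) / δ := div_nonneg (by linarith) hδ.le
  have hMpow : (A + B) / δ ≤ M ^ (q - 1) := by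
    calc (A + B) / δ = (((A + B)/δ) ^ (p-1)) ^ (q-1) := by
          rw [← Real.rpow_mul hABδ, hpq, Real.rpow_one]
      _ ≤ M ^ (q - 1) :=
          Real.rpow_le_rpow (Real.rpow_nonneg hABδ _) (le_max_right _ _) (by linarith)
  have hMq : A * M + B ≤ δ * M ^ q := by
    have h1 : A + B ≤ δ * M ^ (q - 1) := by
      rw [div_le_iff₀ hδ] at hMpow; linarith
    have h2 : M ^ q = M ^ (q-1) * M := by
      rw [← Real.rpow_add_one (ne_of_gt hM0)]; ring_nf
    nlinarith [Real.rpow_nonneg hM0.le (q-1)]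
  -- δ K^(q-1) ≥ p + A T
  have hpAT : 0 ≤ (p + A * T) / δ := div_nonneg (by positivity) hδ.le
  have hKpow : p + A * T ≤ δ * K ^ (q - 1) := by
    have : (p + A * T) / δ ≤ K ^ (q - 1) := by
      calc (p + A * T) / δ = (((p + A * T)/δ) ^ (p-1)) ^ (q-1) := by
            rw [← Real.rpow_mul hpAT, hpq, Real.rpow_one]
        _ ≤ K ^ (q - 1) :=
            Real.rpow_le_rpow (Real.rpow_nonneg hpAT _) (le_max_right _ _) (by linarith)
    rw [div_le_iff₀ hδ] at this; linarith
  -- strict supersolution inequality for Z t = K t^(1-p) + M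
  have hsuper : ∀ r ∈ Ioc 0 T,
      -δ * (K * r ^ (1-p) + M) ^ q + A * (K * r ^ (1-p) + M) + B
        < K * ((1-p) * r ^ (-p)) := by
    intro r ⟨hr0, hrT⟩
    have hu : 0 ≤ K * r ^ (1-p) := by positivity
    have hadd := rpow_superadd hu hM0.le hq1.le
    have huq : (K * r ^ (1-p)) ^ q = K ^ q * r ^ (-p) := by
      rw [Real.mul_rpow hK0.le (Real.rpow_nonneg hr0.le _), ← Real.rpow_mul hr0.le, hpq2]
    have hKsplit : K ^ q = K ^ (q - 1) * K := by
      rw [← Real.rpow_add_one (ne_of_gt hK0)]; ring_nf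
    have hrsplit : r ^ (1 - p) = r * r ^ (-p) := by
      rw [show (1:ℝ) - p = 1 + (-p) by ring, Real.rpow_add hr0, Real.rpow_one]
    have hrp : 0 < r ^ (-p) := Real.rpow_pos_of_pos hr0 _
    have hslack : p - 1 + A * r < δ * K ^ (q - 1) := by
      nlinarith [mul_le_mul_of_nonneg_left hrT hA]
    rw [huq] at hadd
    have e1 : δ * (K ^ q * r ^ (-p)) + δ * M ^ q ≤ δ * (K * r ^ (1-p) + M) ^ q := by
      nlinarith [hadd]
    have eq1 : -(δ * (K ^ q * r ^ (-p))) + A * (K * r ^ (1-p))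
        = K * r ^ (-p) * (-(δ * K ^ (q-1)) + A * r) := by
      rw [hKsplit, hrsplit]; ring
    have e2 : -δ * (K * r ^ (1-p) + M) ^ q + A * (K * r ^ (1-p) + M) + B
        ≤ K * r ^ (-p) * (-(δ * K ^ (q-1)) + A * r) := by linarith
    have e3 : K * r ^ (-p) * (-(δ * K ^ (q-1)) + A * r) < K * r ^ (-p) * (1 - p) :=
      mul_lt_mul_of_pos_left (by linarith) (mul_pos hK0 hrp)
    linarith
  refine ⟨K + M * T ^ (p - 1), ?_⟩
  intro Y Y' hY0 hYd hYineq s hs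
  obtain ⟨hs0, hsT⟩ := hs
  set Z : ℝ → ℝ := fun t => K * t ^ (1 - p) + M with hZdef
  have hZcont : ∀ t : ℝ, t ≠ 0 → ContinuousAt Z t := by
    intro t ht
    exact (continuousAt_const.mul
      (Real.continuousAt_rpow_const t (1-p) (Or.inl ht))).add continuousAt_const
  suffices hYZ : Y s ≤ Z s by
    have hsp : T ^ (1 - p) ≤ s ^ (1 - p) :=
      Real.rpow_le_rpow_of_nonpos hs0 hsT (by linarith)
    have h1 : T ^ (p - 1) * T ^ (1 - p) = 1 := by
      rw [← Real.rpow_add hT]; norm_num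
    have hTp : 0 < T ^ (p - 1) := Real.rpow_pos_of_pos hT _
    have h2 : M * T ^ (p-1) * T ^ (1-p) = M := by rw [mul_assoc, h1, mul_one]
    have h3 := mul_le_mul_of_nonneg_left hsp (mul_nonneg hM0.le hTp.le)
    have hZs : Z s = K * s ^ (1-p) + M := rfl
    nlinarith [hYZ]
  by_contra hcon
  push_neg at hcon
  obtain ⟨x0, -, hN⟩ := isCompact_Icc.exists_isMaxOn (nonempty_Icc.mpr hT.le)
      (fun t ht => ((hYd t ht).continuousAt.continuousWithinAt))
  set N : ℝ := max (Y x0) 0 with hNdef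
  have hN0 : (0:ℝ) ≤ N := le_max_right _ _
  have hYN : ∀ t ∈ Icc 0 T, Y t ≤ N := fun t ht => le_trans (hN ht) (le_max_left _ _)
  set c : ℝ := (K / (N + 1)) ^ (1 / (p - 1)) with hcdef
  have hKN : 0 < K / (N + 1) := div_pos hK0 (by linarith)
  have hc0 : 0 < c := Real.rpow_pos_of_pos hKN _
  have hc1 : K * c ^ (1 - p) = N + 1 := by
    rw [hcdef, ← Real.rpow_mul hKN.le]
    have he : 1 / (p - 1) * (1 - p) = -1 := by field_simp; ring
    rw [he, Real.rpow_neg_one]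
    field_simp
  set t0 : ℝ := min s c with ht0def
  have ht00 : 0 < t0 := lt_min hs0 hc0
  have ht0s : t0 ≤ s := min_le_left _ _
  have ht0T : t0 ≤ T := le_trans ht0s hsT
  have hZt0 : Y t0 < Z t0 := by
    have h1 : c ^ (1 - p) ≤ t0 ^ (1 - p) :=
      Real.rpow_le_rpow_of_nonpos ht00 (min_le_right _ _) (by linarith)
    have h2 : Y t0 ≤ N := hYN t0 ⟨ht00.le, ht0T⟩
    have h3 : N + 1 ≤ K * t0 ^ (1 - p) := by
      rw [← hc1]; exact mul_le_mul_of_nonneg_left h1 hK0.le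
    show Y t0 < K * t0 ^ (1-p) + M
    linarith
  set W : ℝ → ℝ := fun t => Z t - Y t with hWdef
  set S : Set ℝ := Icc t0 s ∩ W ⁻¹' (Iic 0) with hSdef
  have hWcont : ∀ t ∈ Icc t0 s, ContinuousAt W t := by
    intro t ht
    exact (hZcont t (ne_of_gt (lt_of_lt_of_le ht00 ht.1))).sub
      (hYd t ⟨le_trans ht00.le ht.1, le_trans ht.2 hsT⟩).continuousAt
  have hScl : IsClosed S :=
    ContinuousOn.preimage_isClosed_of_isClosed
      (fun t ht => (hWcont t ht).continuousWithinAt) isClosed_Icc isClosed_Iic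
  have hsS : s ∈ S := by
    refine ⟨⟨ht0s, le_refl s⟩, ?_⟩
    simp only [hWdef, mem_preimage, mem_Iic]
    linarith
  have hSbd : BddBelow S := ⟨t0, fun t ht => ht.1.1⟩
  set r : ℝ := sInf S with hrdef
  have hrS : r ∈ S := hScl.csInf_mem ⟨s, hsS⟩ hSbd
  have hrt0 : t0 ≤ r := hrS.1.1
  have hrs : r ≤ s := hrS.1.2
  have hWr_le : W r ≤ 0 := hrS.2
  have hWpos : ∀ t, t0 ≤ t → t < r → 0 < W t := by
    intro t h1 h2
    by_contra h
    push_neg at h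
    exact absurd (csInf_le hSbd ⟨⟨h1, le_trans h2.le hrs⟩, h⟩) (not_le.mpr h2)
  have ht0r : t0 < r := by
    rcases lt_or_eq_of_le hrt0 with h | h
    · exact h
    · exfalso
      have : W t0 > 0 := by simp only [hWdef]; linarith
      rw [h] at this
      linarith
  have hr0 : 0 < r := lt_of_lt_of_le ht00 hrt0
  have hrT : r ≤ T := le_trans hrs hsT
  have hrIcc : r ∈ Icc (0:ℝ) T := ⟨hr0.le, hrT⟩
  have hWr0 : W r = 0 := by
    refine le_antisymm hWr_le ?_
    have htend : Tendsto W (𝓝[<] r) (𝓝 (W r)) :=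
      ((hWcont r ⟨hrt0, hrs⟩).tendsto).mono_left nhdsWithin_le_nhds
    refine ge_of_tendsto htend ?_
    filter_upwards [Ioo_mem_nhdsLT_of_mem (⟨ht0r, le_refl r⟩ : r ∈ Ioc t0 r)] with t ht
    exact (hWpos t ht.1.le ht.2).le
  have hZd : HasDerivAt Z (K * ((1 - p) * r ^ (-p))) r := by
    have h := (Real.hasDerivAt_rpow_const (x := r) (p := 1 - p) (Or.inl hr0.ne')).const_mul K
    have e : (1:ℝ) - p - 1 = -p := by ring
    simpa [e, hZdef] using h.add_const M
  have hYdr := hYd r hrIcc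
  have hWd : HasDerivAt W (K * ((1 - p) * r ^ (-p)) - Y' r) r := hZd.sub hYdr
  have hZY : Z r = Y r := by
    have h := hWr0
    simp only [hWdef] at h
    linarith
  have hpos : 0 < K * ((1 - p) * r ^ (-p)) - Y' r := by
    have h1 := hYineq r hrIcc
    have h2 := hsuper r ⟨hr0, hrT⟩
    have hZr : Z r = K * r ^ (1-p) + M := rfl
    rw [← hZY, hZr] at h1
    linarith
  have hslope := hasDerivAt_iff_tendsto_slope.mp hWd
  have hev : ∀ᶠ t in 𝓝[≠] r, 0 < slope W r t :=
    hslope.eventually (eventually_gt_nhds hpos)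
  have hmono : 𝓝[<] r ≤ 𝓝[≠] r := nhdsWithin_mono r (fun x hx => ne_of_lt hx)
  have hev2 : ∀ᶠ t in 𝓝[<] r, t ∈ Ioo t0 r :=
    Ioo_mem_nhdsLT_of_mem (⟨ht0r, le_refl r⟩ : r ∈ Ioc t0 r)
  obtain ⟨t, ht1, ht2⟩ := ((hev.filter_mono hmono).and hev2).exists
  have hWt : 0 < W t := hWpos t ht2.1.le ht2.2
  have hsl : slope W r t = W t / (t - r) := by
    rw [slope_def_field, hWr0]
    ring_nf
  rw [hsl] at ht1
  have : W t / (t - r) < 0 := div_neg_of_pos_of_neg hWt (by linarith [ht2.2])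
  linarith
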